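/- Let D : ℝ → ℝ be continuously differentiable with D' : ℝ → ℝ a bijection onto ℝ, and define ρ(v) = D((D')⁻¹(−v)) + v·(D')⁻¹(−v). Then D is strictly convex on ℝ if and only if ρ is strictly concave on ℝ. -/

import Mathlib

open Function Set

/-- If `deriv D` is strictly monotone with inverse `g`, then `g (-v)` is the strict
global minimizer of `x ↦ D x + v * x`. -/
lemma strict_min_aux (D : ℝ → ℝ) (hD : ContDiff ℝ 1 D)
    (hbij : Function.Bijective (deriv D)) (hmono : StrictMono (deriv D))
    (v x : ℝ) (hx : x ≠ Function.invFun (deriv D) (-v)) :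
    D (Function.invFun (deriv D) (-v)) + v * Function.invFun (deriv D) (-v)
      < D x + v * x := by
  set x₀ := Function.invFun (deriv D) (-v) with hx₀
  have hd : deriv D x₀ = -v := Function.invFun_eq (hbij.2 (-v))
  have hdiff : Differentiable ℝ D := hD.differentiable one_ne_zero
  rcases lt_or_gt_of_ne hx with h | h
  · obtain ⟨c, hc, hc'⟩ := exists_deriv_eq_slope D h hdiff.continuous.continuousOn
      (fun y _ => (hdiff y).differentiableWithinAt)
    have hlt : deriv D c < -v := by rw [← hd]; exact hmono hc.2
    rw [hc'] at hlt
    have hpos : (0:ℝ) < x₀ - x := by linarith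
    nlinarith [(div_lt_iff₀ hpos).mp hlt]
  · obtain ⟨c, hc, hc'⟩ := exists_deriv_eq_slope D h hdiff.continuous.continuousOn
      (fun y _ => (hdiff y).differentiableWithinAt)
    have hlt : -v < deriv D c := by rw [← hd]; exact hmono hc.1
    rw [hc'] at hlt
    have hpos : (0:ℝ) < x - x₀ := by linarith
    nlinarith [(lt_div_iff₀ hpos).mp hlt]

/-- If `deriv D` is strictly antitone with inverse `g`, then `g (-v)` is the strict
global maximizer of `x ↦ D x + v * x`. -/
lemma strict_max_aux (D : ℝ → ℝ) (hD : ContDiff ℝ 1 D)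
    (hbij : Function.Bijective (deriv D)) (hanti : StrictAnti (deriv D))
    (v x : ℝ) (hx : x ≠ Function.invFun (deriv D) (-v)) :
    D x + v * x <
      D (Function.invFun (deriv D) (-v)) + v * Function.invFun (deriv D) (-v) := by
  set x₀ := Function.invFun (deriv D) (-v) with hx₀
  have hd : deriv D x₀ = -v := Function.invFun_eq (hbij.2 (-v))
  have hdiff : Differentiable ℝ D := hD.differentiable one_ne_zero
  rcases lt_or_gt_of_ne hx with h | h
  · obtain ⟨c, hc, hc'⟩ := exists_deriv_eq_slope D h hdiff.continuous.continuousOn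
      (fun y _ => (hdiff y).differentiableWithinAt)
    have hlt : -v < deriv D c := by rw [← hd]; exact hanti hc.2
    rw [hc'] at hlt
    have hpos : (0:ℝ) < x₀ - x := by linarith
    nlinarith [(lt_div_iff₀ hpos).mp hlt]
  · obtain ⟨c, hc, hc'⟩ := exists_deriv_eq_slope D h hdiff.continuous.continuousOn
      (fun y _ => (hdiff y).differentiableWithinAt)
    have hlt : deriv D c < -v := by rw [← hd]; exact hanti hc.1
    rw [hc'] at hlt
    have hpos : (0:ℝ) < x - x₀ := by linarith
    nlinarith [(div_lt_iff₀ hpos).mp hlt]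

lemma invFun_injective_of_bij {f : ℝ → ℝ} (hbij : Function.Bijective f) :
    Function.Injective (Function.invFun f) := by
  intro a b hab
  have ha : f (Function.invFun f a) = a := Function.invFun_eq (hbij.2 a)
  have hb : f (Function.invFun f b) = b := Function.invFun_eq (hbij.2 b)
  rw [← ha, ← hb, hab]

/-- In the strictly-monotone case, `ρ` is strictly concave. -/
lemma rho_strictConcave (D : ℝ → ℝ) (hD : ContDiff ℝ 1 D)
    (hbij : Function.Bijective (deriv D)) (hmono : StrictMono (deriv D))
    (ρ : ℝ → ℝ)
    (hρ : ∀ v : ℝ, ρ v = D (Function.invFun (deriv D) (-v))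
        + v * Function.invFun (deriv D) (-v)) :
    StrictConcaveOn ℝ Set.univ ρ := by
  refine ⟨convex_univ, ?_⟩
  intro v₁ _ v₂ _ hne a b ha hb hab
  simp only [smul_eq_mul]
  set m := a * v₁ + b * v₂ with hm
  set g := Function.invFun (deriv D) with hg
  have hginj : Function.Injective g := invFun_injective_of_bij hbij
  have hm1 : m ≠ v₁ := by
    intro h; apply hne
    have hbv : b * v₂ = b * v₁ := by linear_combination h - v₁ * hab
    exact (mul_left_cancel₀ hb.ne' hbv).symm
  have hm2 : m ≠ v₂ := by
    intro h; apply hne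
    have hav : a * v₁ = a * v₂ := by linear_combination h - v₂ * hab
    exact mul_left_cancel₀ ha.ne' hav
  have h1 : ρ v₁ < D (g (-m)) + v₁ * g (-m) := by
    rw [hρ v₁]
    exact strict_min_aux D hD hbij hmono v₁ (g (-m))
      (fun h => hm1 (neg_injective (hginj h)))
  have h2 : ρ v₂ < D (g (-m)) + v₂ * g (-m) := by
    rw [hρ v₂]
    exact strict_min_aux D hD hbij hmono v₂ (g (-m))
      (fun h => hm2 (neg_injective (hginj h)))
  have hρm : ρ m = D (g (-m)) + m * g (-m) := hρ m
  have e : a * (D (g (-m)) + v₁ * g (-m)) + b * (D (g (-m)) + v₂ * g (-m))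
      = (a + b) * D (g (-m)) + m * g (-m) := by rw [hm]; ring
  rw [hab, one_mul] at e
  have := add_lt_add (mul_lt_mul_of_pos_left h1 ha) (mul_lt_mul_of_pos_left h2 hb)
  rw [e] at this
  linarith [hρm]

/-- In the strictly-antitone case, `ρ` is strictly convex. -/
lemma rho_strictConvex (D : ℝ → ℝ) (hD : ContDiff ℝ 1 D)
    (hbij : Function.Bijective (deriv D)) (hanti : StrictAnti (deriv D))
    (ρ : ℝ → ℝ)
    (hρ : ∀ v : ℝ, ρ v = D (Function.invFun (deriv D) (-v))
        + v * Function.invFun (deriv D) (-v)) :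
    StrictConvexOn ℝ Set.univ ρ := by
  refine ⟨convex_univ, ?_⟩
  intro v₁ _ v₂ _ hne a b ha hb hab
  simp only [smul_eq_mul]
  set m := a * v₁ + b * v₂ with hm
  set g := Function.invFun (deriv D) with hg
  have hginj : Function.Injective g := invFun_injective_of_bij hbij
  have hm1 : m ≠ v₁ := by
    intro h; apply hne
    have hbv : b * v₂ = b * v₁ := by linear_combination h - v₁ * hab
    exact (mul_left_cancel₀ hb.ne' hbv).symm
  have hm2 : m ≠ v₂ := by
    intro h; apply hne
    have hav : a * v₁ = a * v₂ := by linear_combination h - v₂ * hab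
    exact mul_left_cancel₀ ha.ne' hav
  have h1 : D (g (-m)) + v₁ * g (-m) < ρ v₁ := by
    rw [hρ v₁]
    exact strict_max_aux D hD hbij hanti v₁ (g (-m))
      (fun h => hm1 (neg_injective (hginj h)))
  have h2 : D (g (-m)) + v₂ * g (-m) < ρ v₂ := by
    rw [hρ v₂]
    exact strict_max_aux D hD hbij hanti v₂ (g (-m))
      (fun h => hm2 (neg_injective (hginj h)))
  have hρm : ρ m = D (g (-m)) + m * g (-m) := hρ m
  have e : a * (D (g (-m)) + v₁ * g (-m)) + b * (D (g (-m)) + v₂ * g (-m))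
      = (a + b) * D (g (-m)) + m * g (-m) := by rw [hm]; ring
  rw [hab, one_mul] at e
  have := add_lt_add (mul_lt_mul_of_pos_left h1 ha) (mul_lt_mul_of_pos_left h2 hb)
  rw [e] at this
  linarith [hρm]

/-- A function on `univ` cannot be both strictly convex and strictly concave. -/
lemma not_both (f : ℝ → ℝ) (h1 : StrictConvexOn ℝ Set.univ f)
    (h2 : StrictConcaveOn ℝ Set.univ f) : False := by
  have ha : (0:ℝ) < 1/2 := by norm_num
  have hc := h1.2 (Set.mem_univ (0:ℝ)) (Set.mem_univ (1:ℝ)) (by norm_num) ha ha (by norm_num)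
  have hd := h2.2 (Set.mem_univ (0:ℝ)) (Set.mem_univ (1:ℝ)) (by norm_num) ha ha (by norm_num)
  linarith

/-- If `D : ℝ → ℝ` is continuously differentiable with `D'` a bijection of `ℝ`,
and `ρ(v) = D((D')⁻¹(-v)) + v·(D')⁻¹(-v)`, then `D` is strictly convex on `ℝ` if and only if
`ρ` is strictly concave on `ℝ`. -/
theorem strictConvex_iff_dual_strictConcave
    (D : ℝ → ℝ) (hD : ContDiff ℝ 1 D)
    (hbij : Function.Bijective (deriv D))
    (ρ : ℝ → ℝ)
    (hρ : ∀ v : ℝ, ρ v = D (Function.invFun (deriv D) (-v))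
        + v * Function.invFun (deriv D) (-v)) :
    StrictConvexOn ℝ Set.univ D ↔ StrictConcaveOn ℝ Set.univ ρ := by
  have hcont : Continuous (deriv D) := hD.continuous_deriv le_rfl
  rcases hcont.strictMono_of_inj hbij.1 with hmono | hanti
  · constructor
    · intro _; exact rho_strictConcave D hD hbij hmono ρ hρ
    · intro _; exact hmono.strictConvexOn_univ_of_deriv hD.continuous
  · have hDconc : StrictConcaveOn ℝ Set.univ D :=
      hanti.strictConcaveOn_univ_of_deriv hD.continuous
    have hρconv : StrictConvexOn ℝ Set.univ ρ := rho_strictConvex D hD hbij hanti ρ hρ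
    exact iff_of_false (fun h => not_both D h hDconc) (fun h => not_both ρ hρconv h)
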